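/- Under the assumptions of the previous oracle inequality with β = β* (i.e., (1/(nT))‖XᵀW‖_{2,∞} ≤ λ/2 and β̂ a group-Lasso minimizer with y = Xβ* + W), one has ‖(β̂ − β*)_{J^c}‖_{2,1} ≤ 3‖(β̂ − β*)_J‖_{2,1}, where J = J(β*) = {j : (β*)^j ≠ 0}. -/

import Mathlib

open scoped BigOperators Classical
open Matrix
open scoped RealInnerProductSpace

noncomputable def blk {M T : ℕ} (β : Fin M × Fin T → ℝ) (j : Fin M) :
    EuclideanSpace ℝ (Fin T) := WithLp.toLp 2 (fun t => β (j, t))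

noncomputable def norm21 {M T : ℕ} (β : Fin M × Fin T → ℝ) : ℝ := ∑ j, ‖blk β j‖

noncomputable def norm2inf {M T : ℕ} (β : Fin M × Fin T → ℝ) : ℝ :=
  ‖(fun j => ‖blk β j‖ : Fin M → ℝ)‖

theorem stmt_11 (n T M : ℕ) (hn : 0 < n) (hT : 0 < T)
    (X : Matrix (Fin (n * T)) (Fin M × Fin T) ℝ)
    (βstar βhat : Fin M × Fin T → ℝ) (W : Fin (n * T) → ℝ)
    (y : Fin (n * T) → ℝ) (hy : y = X.mulVec βstar + W)
    (lam : ℝ) (hlam : 0 < lam)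
    (hmin : ∀ β : Fin M × Fin T → ℝ,
        (1 / (n * T : ℝ)) * ∑ i, (X.mulVec βhat i - y i) ^ 2 +
          2 * lam * norm21 βhat ≤
        (1 / (n * T : ℝ)) * ∑ i, (X.mulVec β i - y i) ^ 2 + 2 * lam * norm21 β)
    (hW : (1 / (n * T : ℝ)) * norm2inf (Xᵀ.mulVec W) ≤ lam / 2) :
    ∑ j ∈ (Finset.univ.filter (fun j => blk βstar j ≠ 0))ᶜ,
        ‖blk βhat j - blk βstar j‖ ≤
      3 * ∑ j ∈ Finset.univ.filter (fun j => blk βstar j ≠ 0),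
        ‖blk βhat j - blk βstar j‖ := by
  classical
  set Δ : Fin M × Fin T → ℝ := βhat - βstar with hΔ
  have hblk : ∀ j, blk βhat j - blk βstar j = blk Δ j := fun j => by ext t; simp [blk, hΔ]
  set S : Fin M × Fin T → ℝ := Xᵀ.mulVec W with hS
  set c : ℝ := 1 / (n * T : ℝ) with hc
  have hnT : (0:ℝ) < (n:ℝ) * (T:ℝ) := by positivity
  have hcpos : 0 < c := by rw [hc]; positivity
  set J := Finset.univ.filter (fun j => blk βstar j ≠ 0) with hJ
  -- residuals
  have hres : ∀ i, X.mulVec βhat i - y i = X.mulVec Δ i - W i := by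
    intro i
    have : X.mulVec Δ = X.mulVec βhat - X.mulVec βstar := by
      rw [hΔ, Matrix.mulVec_sub]
    rw [this, hy]
    simp [Pi.sub_apply, Pi.add_apply]
    ring
  have hres2 : ∀ i, X.mulVec βstar i - y i = -W i := by
    intro i; rw [hy]; simp
  have h1 := hmin βstar
  simp only [hres, hres2] at h1
  -- expand squares
  have hexp : ∑ i, (X.mulVec Δ i - W i)^2
      = ∑ i, (X.mulVec Δ i)^2 - 2 * ∑ i, X.mulVec Δ i * W i + ∑ i, (W i)^2 := by
    have : ∀ i, (X.mulVec Δ i - W i)^2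
        = (X.mulVec Δ i)^2 - 2 * (X.mulVec Δ i * W i) + (W i)^2 := by
      intro i; ring
    simp_rw [this]
    rw [Finset.sum_add_distrib, Finset.sum_sub_distrib, Finset.mul_sum]
  have hneg : ∀ i, (-W i)^2 = (W i)^2 := by intro i; ring
  simp only [hneg, hexp] at h1
  -- h1 : c * (A - 2B + C) + 2λ N(βhat) ≤ c * C + 2λ N(β*)
  have hmain0 : c * ∑ i, (X.mulVec Δ i)^2
      ≤ 2 * c * ∑ i, X.mulVec Δ i * W i + 2 * lam * (norm21 βstar - norm21 βhat) := by
    nlinarith [h1]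
  -- inner product swap
  have hswap : ∑ i, X.mulVec Δ i * W i = ∑ p, S p * Δ p := by
    simp_rw [hS, Matrix.mulVec, dotProduct, Finset.sum_mul, Matrix.transpose_apply]
    rw [Finset.sum_comm]
    apply Finset.sum_congr rfl
    intro p _
    apply Finset.sum_congr rfl
    intro i _
    ring
  -- block decomposition of the inner product
  have hdot : ∑ p, S p * Δ p ≤ norm2inf S * norm21 Δ := by
    have hprod : ∑ p : Fin M × Fin T, S p * Δ p
        = ∑ j, (inner ℝ (blk S j) (blk Δ j) : ℝ) := by
      rw [Fintype.sum_prod_type]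
      apply Finset.sum_congr rfl
      intro j _
      rw [PiLp.inner_apply]
      apply Finset.sum_congr rfl
      intro t _
      simp [blk, RCLike.inner_apply, mul_comm]
    rw [hprod, norm21, Finset.mul_sum]
    apply Finset.sum_le_sum
    intro j _
    calc (inner ℝ (blk S j) (blk Δ j) : ℝ) ≤ ‖blk S j‖ * ‖blk Δ j‖ := real_inner_le_norm _ _
      _ ≤ norm2inf S * ‖blk Δ j‖ := by
          apply mul_le_mul_of_nonneg_right _ (norm_nonneg _)
          have := norm_le_pi_norm (fun j => ‖blk S j‖ : Fin M → ℝ) j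
          simpa [norm2inf, Real.norm_eq_abs, abs_of_nonneg (norm_nonneg (blk S j))] using this
  have hn21 : 0 ≤ norm21 Δ := Finset.sum_nonneg fun j _ => norm_nonneg _
  have hWbd : c * (norm2inf S * norm21 Δ) ≤ (lam / 2) * norm21 Δ := by
    rw [← mul_assoc]
    exact mul_le_mul_of_nonneg_right hW hn21
  have hsq : 0 ≤ ∑ i, (X.mulVec Δ i)^2 :=
    Finset.sum_nonneg fun i _ => sq_nonneg _
  have hmain : 0 ≤ lam * norm21 Δ + 2 * lam * (norm21 βstar - norm21 βhat) := by
    have h2 : c * ∑ p, S p * Δ p ≤ (lam / 2) * norm21 Δ :=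
      le_trans (mul_le_mul_of_nonneg_left hdot (le_of_lt hcpos)) hWbd
    rw [hswap] at hmain0
    nlinarith [mul_nonneg (le_of_lt hcpos) hsq]
  -- splitting sums
  have hsplit : ∀ β : Fin M × Fin T → ℝ,
      norm21 β = ∑ j ∈ J, ‖blk β j‖ + ∑ j ∈ Jᶜ, ‖blk β j‖ := by
    intro β
    rw [norm21, ← Finset.sum_add_sum_compl J]
  have hJc : ∀ j ∈ Jᶜ, blk βstar j = 0 := by
    intro j hj
    simpa [hJ, Finset.mem_compl, Finset.mem_filter, not_not] using hj
  have hstar0 : ∑ j ∈ Jᶜ, ‖blk βstar j‖ = 0 :=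
    Finset.sum_eq_zero fun j hj => by rw [hJc j hj, norm_zero]
  have hhatJc : ∑ j ∈ Jᶜ, ‖blk βhat j‖ = ∑ j ∈ Jᶜ, ‖blk Δ j‖ := by
    apply Finset.sum_congr rfl
    intro j hj
    rw [← hblk j, hJc j hj, sub_zero]
  have hJtri : ∑ j ∈ J, (‖blk βstar j‖ - ‖blk βhat j‖) ≤ ∑ j ∈ J, ‖blk Δ j‖ := by
    apply Finset.sum_le_sum
    intro j _
    rw [← hblk j]
    calc ‖blk βstar j‖ - ‖blk βhat j‖ ≤ ‖blk βstar j - blk βhat j‖ := norm_sub_norm_le _ _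
      _ = ‖blk βhat j - blk βstar j‖ := norm_sub_rev _ _
  simp only [hblk]
  have e1 := hsplit Δ
  have e2 := hsplit βstar
  have e3 := hsplit βhat
  rw [Finset.sum_sub_distrib] at hJtri
  nlinarith [hmain, hJtri]
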